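/- Let ω be continuous, strictly increasing, concave with ω(0) = 0. Fix an integer k ≥ 1 and for a nonnegative integer j ≤ k define φ_j : ℝ≥0 → ℝ≥0 by φ_j(t) := ω(ψ_j(t)) where ψ_j is the inverse of s ↦ s^{k−j} ω(s) for j < k, and φ_k(t) := t. Then for all t₁, t₂ > 0 and all nonnegative integers a, b with a + b ≤ k, one has φ_a(t₁^b · t₂) ≤ max{ω(t₁), φ_{a+b}(t₂)}. -/
import Mathlib


/-- `ψ_m`: the inverse of `s ↦ s^m * ω s` on `[0,∞)`. -/
noncomputable def psiInv (ω : ℝ → ℝ) (m : ℕ) (t : ℝ) : ℝ :=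
  Function.invFunOn (fun s => s ^ m * ω s) (Set.Ici 0) t

/-- `φ_j` for `0 ≤ j ≤ k`: `ω ∘ ψ_{k-j}` if `j < k`, the identity if `j = k`. -/
noncomputable def phiOm (ω : ℝ → ℝ) (k j : ℕ) (t : ℝ) : ℝ :=
  if j < k then ω (psiInv ω (k - j) t) else t

section Aux

variable {ω : ℝ → ℝ}

lemma F_strictMono (hnn : ∀ t, 0 ≤ t → 0 ≤ ω t)
    (hmono : StrictMonoOn ω (Set.Ici 0)) (m : ℕ) :
    StrictMonoOn (fun s => s ^ m * ω s) (Set.Ici 0) := by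
  intro s hs t ht hst
  have ht0 : 0 < t := lt_of_le_of_lt hs hst
  calc s ^ m * ω s ≤ t ^ m * ω s :=
        mul_le_mul_of_nonneg_right (pow_le_pow_left₀ hs hst.le m) (hnn s hs)
    _ < t ^ m * ω t := mul_lt_mul_of_pos_left (hmono hs ht hst) (pow_pos ht0 m)

lemma F_surj (hcont : ContinuousOn ω (Set.Ici 0))
    (hmono : StrictMonoOn ω (Set.Ici 0)) (h0 : ω 0 = 0)
    {m : ℕ} (hm : 1 ≤ m) {t : ℝ} (ht : 0 ≤ t) :
    ∃ s ∈ Set.Ici (0:ℝ), s ^ m * ω s = t := by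
  have hω1 : 0 < ω 1 := by
    have := hmono (Set.mem_Ici.mpr le_rfl) (Set.mem_Ici.mpr zero_le_one) zero_lt_one
    rwa [h0] at this
  set R : ℝ := max 1 (t / ω 1) with hR
  have hR1 : 1 ≤ R := le_max_left _ _
  have hR0 : (0:ℝ) ≤ R := zero_le_one.trans hR1
  have hFR : t ≤ R ^ m * ω R := by
    have h1 : R ≤ R ^ m := le_self_pow₀ hR1 (by omega)
    have h2 : ω 1 ≤ ω R := hmono.monotoneOn (Set.mem_Ici.mpr zero_le_one)
      (Set.mem_Ici.mpr hR0) hR1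
    have h3 : R * ω 1 ≤ R ^ m * ω R :=
      mul_le_mul h1 h2 hω1.le (pow_nonneg hR0 m)
    have h4 : t ≤ R * ω 1 := by
      have : t / ω 1 ≤ R := le_max_right _ _
      calc t = (t / ω 1) * ω 1 := (div_mul_cancel₀ t hω1.ne').symm
        _ ≤ R * ω 1 := mul_le_mul_of_nonneg_right this hω1.le
    exact h4.trans h3
  have hcF : ContinuousOn (fun s => s ^ m * ω s) (Set.Icc 0 R) :=
    ((continuousOn_id.pow m).mul hcont).mono Set.Icc_subset_Ici_self
  have hmem : t ∈ Set.Icc ((fun s => s ^ m * ω s) 0) ((fun s => s ^ m * ω s) R) := by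
    constructor
    · simpa [h0] using ht
    · simpa using hFR
  obtain ⟨s, hs, hfs⟩ := intermediate_value_Icc hR0 hcF hmem
  exact ⟨s, Set.mem_Ici.mpr hs.1, hfs⟩

lemma psiInv_spec (hcont : ContinuousOn ω (Set.Ici 0))
    (hmono : StrictMonoOn ω (Set.Ici 0)) (h0 : ω 0 = 0)
    {m : ℕ} (hm : 1 ≤ m) {t : ℝ} (ht : 0 ≤ t) :
    0 ≤ psiInv ω m t ∧ (psiInv ω m t) ^ m * ω (psiInv ω m t) = t := by
  have hex := F_surj hcont hmono h0 hm ht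
  exact ⟨Function.invFunOn_mem hex, Function.invFunOn_eq hex⟩

end Aux

/-- Lemma 2.2: for `t₁, t₂ > 0` and `a + b ≤ k`,
`φ_a(t₁^b · t₂) ≤ max{ω(t₁), φ_{a+b}(t₂)}`. -/
theorem phi_product_estimate (k : ℕ) (hk : 1 ≤ k)
    (ω : ℝ → ℝ)
    (hnn : ∀ t, 0 ≤ t → 0 ≤ ω t)
    (hcont : ContinuousOn ω (Set.Ici 0))
    (hmono : StrictMonoOn ω (Set.Ici 0))
    (hconc : ConcaveOn ℝ (Set.Ici 0) ω)
    (h0 : ω 0 = 0) :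
    ∀ t₁ t₂ : ℝ, 0 < t₁ → 0 < t₂ → ∀ a b : ℕ, a + b ≤ k →
      phiOm ω k a (t₁ ^ b * t₂) ≤ max (ω t₁) (phiOm ω k (a + b) t₂) := by
  intro t₁ t₂ ht₁ ht₂ a b hab
  rcases Nat.eq_zero_or_pos b with hb | hb
  · subst hb
    simp only [pow_zero, one_mul, Nat.add_zero]
    exact le_max_right _ _
  · have ha : a < k := by omega
    set m := k - a with hmdef
    have hm1 : 1 ≤ m := by omega
    have hbm : b ≤ m := by omega
    have htt : (0:ℝ) ≤ t₁ ^ b * t₂ := by positivity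
    obtain ⟨hs0, hseq⟩ := psiInv_spec hcont hmono h0 hm1 htt
    set s := psiInv ω m (t₁ ^ b * t₂) with hsdef
    have hLHS : phiOm ω k a (t₁ ^ b * t₂) = ω s := by
      rw [phiOm, if_pos ha]
    rw [hLHS]
    by_cases hst : s ≤ t₁
    · exact le_trans (hmono.monotoneOn (Set.mem_Ici.mpr hs0)
        (Set.mem_Ici.mpr ht₁.le) hst) (le_max_left _ _)
    · push_neg at hst
      have hspos : 0 < s := ht₁.trans hst
      have hωs : 0 < ω s := by
        have := hmono (Set.mem_Ici.mpr le_rfl) (Set.mem_Ici.mpr hs0) hspos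
        rwa [h0] at this
      have key : s ^ (m - b) * ω s < t₂ := by
        have hsplit : s ^ b * (s ^ (m - b) * ω s) = t₁ ^ b * t₂ := by
          rw [← mul_assoc, ← pow_add]
          rw [show b + (m - b) = m by omega]
          exact hseq
        have hlt : t₁ ^ b * (s ^ (m - b) * ω s) < t₁ ^ b * t₂ := by
          calc t₁ ^ b * (s ^ (m - b) * ω s) < s ^ b * (s ^ (m - b) * ω s) := by
                apply mul_lt_mul_of_pos_right
                  (pow_lt_pow_left₀ hst ht₁.le (by omega))
                positivity
            _ = t₁ ^ b * t₂ := hsplit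
        exact lt_of_mul_lt_mul_left hlt (pow_pos ht₁ b).le
      by_cases habk : a + b < k
      · have hm'1 : 1 ≤ k - (a + b) := by omega
        obtain ⟨hs'0, hs'eq⟩ := psiInv_spec hcont hmono h0 hm'1 ht₂.le
        set s' := psiInv ω (k - (a + b)) t₂ with hs'def
        have hmb : m - b = k - (a + b) := by omega
        have hFlt : s ^ (k - (a + b)) * ω s < s' ^ (k - (a + b)) * ω s' := by
          rw [hs'eq, ← hmb]; exact key
        have hss' : s < s' :=
          ((F_strictMono hnn hmono (k - (a + b))).lt_iff_lt
            (Set.mem_Ici.mpr hs0) (Set.mem_Ici.mpr hs'0)).mp hFlt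
        have : ω s ≤ ω s' := (hmono (Set.mem_Ici.mpr hs0) (Set.mem_Ici.mpr hs'0) hss').le
        rw [phiOm, if_pos habk]
        exact le_trans this (le_max_right _ _)
      · have hmb : m - b = 0 := by omega
        rw [hmb, pow_zero, one_mul] at key
        rw [phiOm, if_neg habk]
        exact le_trans key.le (le_max_right _ _)
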